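/- arXiv:2412.11595 — 4 statements merged into one kernel-verified Lean document; each statement's English description precedes it below -/
import Mathlib

section
/- Let ι and κ be finite nonempty index types, and let A : Matrix ι ι ℂ and B : Matrix κ κ ℂ be positive definite Hermitian matrices. Then log (A ⊗ₖ B) = (log A) ⊗ₖ (1 : Matrix κ κ ℂ) + (1 : Matrix ι ι ℂ) ⊗ₖ (log B), where log denotes the continuous functional calculus applied with Real.log. -/
open Matrix Kronecker
open scoped ComplexOrder

/-- `matLog ρ` is `Real.log` applied to a Hermitian matrix `ρ` through the
continuous functional calculus (`Matrix.IsHermitian.cfc`); junk value `0` on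
non-Hermitian matrices. -/
noncomputable def matLog {n : Type*} [Fintype n] [DecidableEq n]
    (ρ : Matrix n n ℂ) : Matrix n n ℂ :=
  if h : ρ.IsHermitian then h.cfc Real.log else 0

set_option linter.unusedSectionVars false

section aux
variable {ι κ : Type*} [Fintype ι] [Fintype κ] [DecidableEq ι] [DecidableEq κ]

/-- `A ↦ A ⊗ₖ 1` as a ring hom. -/
def kronRightHom : Matrix ι ι ℂ →+* Matrix (ι × κ) (ι × κ) ℂ where
  toFun A := A ⊗ₖ (1 : Matrix κ κ ℂ)
  map_one' := Matrix.one_kronecker_one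
  map_mul' A B := by rw [← Matrix.mul_kronecker_mul, mul_one]
  map_zero' := Matrix.zero_kronecker _
  map_add' A B := Matrix.add_kronecker A B _

/-- `B ↦ 1 ⊗ₖ B` as a ring hom. -/
def kronLeftHom : Matrix κ κ ℂ →+* Matrix (ι × κ) (ι × κ) ℂ where
  toFun B := (1 : Matrix ι ι ℂ) ⊗ₖ B
  map_one' := Matrix.one_kronecker_one
  map_mul' A B := by rw [← Matrix.mul_kronecker_mul, mul_one]
  map_zero' := Matrix.kronecker_zero _
  map_add' A B := Matrix.kronecker_add _ A B

lemma continuous_kronRightHom : Continuous (kronRightHom (ι := ι) (κ := κ)) := by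
  apply continuous_matrix
  intro i j
  simp only [kronRightHom, RingHom.coe_mk, MonoidHom.coe_mk, OneHom.coe_mk,
    Matrix.kroneckerMap_apply]
  exact (continuous_apply_apply i.1 j.1).mul continuous_const

lemma continuous_kronLeftHom : Continuous (kronLeftHom (ι := ι) (κ := κ)) := by
  apply continuous_matrix
  intro i j
  exact continuous_const.mul ((continuous_apply j.2).comp (continuous_apply i.2))

lemma kron_conjTranspose (X : Matrix ι ι ℂ) (Y : Matrix κ κ ℂ) :
    (X ⊗ₖ Y)ᴴ = Xᴴ ⊗ₖ Yᴴ := by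
  ext ⟨i, k⟩ ⟨j, l⟩
  simp [Matrix.conjTranspose_apply, Matrix.kroneckerMap_apply, mul_comm]

end aux

/-- The logarithm of a Kronecker product of positive definite matrices:
`log (A ⊗ₖ B) = log A ⊗ₖ 1 + 1 ⊗ₖ log B`. -/
theorem matLog_kronecker {ι κ : Type*} [Fintype ι] [Fintype κ]
    [DecidableEq ι] [DecidableEq κ] [Nonempty ι] [Nonempty κ]
    (A : Matrix ι ι ℂ) (B : Matrix κ κ ℂ) (hA : A.PosDef) (hB : B.PosDef) :
    matLog (A ⊗ₖ B) =
      matLog A ⊗ₖ (1 : Matrix κ κ ℂ) + (1 : Matrix ι ι ℂ) ⊗ₖ matLog B := by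
  letI : NormedRing (Matrix ι ι ℂ) := Matrix.linftyOpNormedRing
  letI : NormedAlgebra ℝ (Matrix ι ι ℂ) := Matrix.linftyOpNormedAlgebra
  letI : NormedAlgebra ℚ (Matrix ι ι ℂ) := Matrix.linftyOpNormedAlgebra
  letI : NormedRing (Matrix κ κ ℂ) := Matrix.linftyOpNormedRing
  letI : NormedAlgebra ℝ (Matrix κ κ ℂ) := Matrix.linftyOpNormedAlgebra
  letI : NormedAlgebra ℚ (Matrix κ κ ℂ) := Matrix.linftyOpNormedAlgebra
  letI : NormedRing (Matrix (ι × κ) (ι × κ) ℂ) := Matrix.linftyOpNormedRing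
  letI : NormedAlgebra ℝ (Matrix (ι × κ) (ι × κ) ℂ) := Matrix.linftyOpNormedAlgebra
  have hAh : A.IsHermitian := hA.1
  have hBh : B.IsHermitian := hB.1
  have hLA : matLog A = cfc Real.log A := by
    rw [matLog, dif_pos hAh, ← Matrix.IsHermitian.cfc_eq]
  have hLB : matLog B = cfc Real.log B := by
    rw [matLog, dif_pos hBh, ← Matrix.IsHermitian.cfc_eq]
  have hspecA : ∀ x ∈ spectrum ℝ A, 0 < x := by
    rw [hAh.spectrum_real_eq_range_eigenvalues]
    rintro x ⟨i, rfl⟩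
    exact hA.eigenvalues_pos i
  have hspecB : ∀ x ∈ spectrum ℝ B, 0 < x := by
    rw [hBh.spectrum_real_eq_range_eigenvalues]
    rintro x ⟨i, rfl⟩
    exact hB.eigenvalues_pos i
  have hAsa : IsSelfAdjoint A := hAh
  have hBsa : IsSelfAdjoint B := hBh
  have heA : NormedSpace.exp (matLog A) = A := by
    rw [hLA]; open scoped MatrixOrder in exact @CFC.exp_log _ _ _ _ Matrix.IsHermitian.instContinuousFunctionalCalculus _ _ _ A hA.isStrictlyPositive
  have heB : NormedSpace.exp (matLog B) = B := by
    rw [hLB]; open scoped MatrixOrder in exact @CFC.exp_log _ _ _ _ Matrix.IsHermitian.instContinuousFunctionalCalculus _ _ _ B hB.isStrictlyPositive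
  set M : Matrix (ι × κ) (ι × κ) ℂ :=
    matLog A ⊗ₖ (1 : Matrix κ κ ℂ) + (1 : Matrix ι ι ℂ) ⊗ₖ matLog B with hM
  have hLAsa : IsSelfAdjoint (matLog A) := hLA ▸ cfc_predicate Real.log A
  have hLBsa : IsSelfAdjoint (matLog B) := hLB ▸ cfc_predicate Real.log B
  have hMsa : IsSelfAdjoint M := by
    have h1 : IsSelfAdjoint (matLog A ⊗ₖ (1 : Matrix κ κ ℂ)) := by
      show star _ = _
      rw [Matrix.star_eq_conjTranspose, kron_conjTranspose, Matrix.conjTranspose_one,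
        ← Matrix.star_eq_conjTranspose, hLAsa.star_eq]
    have h2 : IsSelfAdjoint ((1 : Matrix ι ι ℂ) ⊗ₖ matLog B) := by
      show star _ = _
      rw [Matrix.star_eq_conjTranspose, kron_conjTranspose, Matrix.conjTranspose_one,
        ← Matrix.star_eq_conjTranspose, hLBsa.star_eq]
    exact h1.add h2
  have hcomm : Commute (matLog A ⊗ₖ (1 : Matrix κ κ ℂ)) ((1 : Matrix ι ι ℂ) ⊗ₖ matLog B) := by
    unfold Commute SemiconjBy
    rw [← Matrix.mul_kronecker_mul, ← Matrix.mul_kronecker_mul, one_mul, mul_one, one_mul, mul_one]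
  have hexpM : NormedSpace.exp M = A ⊗ₖ B := by
    rw [hM, Matrix.exp_add_of_commute _ _ hcomm]
    have h1 : NormedSpace.exp (matLog A ⊗ₖ (1 : Matrix κ κ ℂ))
        = NormedSpace.exp (matLog A) ⊗ₖ (1 : Matrix κ κ ℂ) :=
      (NormedSpace.map_exp (kronRightHom (ι := ι) (κ := κ)) continuous_kronRightHom (matLog A)).symm
    have h2 : NormedSpace.exp ((1 : Matrix ι ι ℂ) ⊗ₖ matLog B)
        = (1 : Matrix ι ι ℂ) ⊗ₖ NormedSpace.exp (matLog B) :=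
      (NormedSpace.map_exp (kronLeftHom (ι := ι) (κ := κ)) continuous_kronLeftHom (matLog B)).symm
    rw [h1, h2, heA, heB, ← Matrix.mul_kronecker_mul, mul_one, one_mul]
  have hABh : (A ⊗ₖ B).IsHermitian := by
    rw [← hexpM]
    exact Matrix.IsHermitian.exp hMsa
  rw [matLog, dif_pos hABh, ← Matrix.IsHermitian.cfc_eq, ← hexpM]
  exact @CFC.log_exp _ _ _ _ Matrix.IsHermitian.instContinuousFunctionalCalculus M hMsa
end

section
/- Let ι and κ be finite nonempty index types, let ρ₁, σ₁ : Matrix ι ι ℂ and ρ₂, σ₂ : Matrix κ κ ℂ be positive definite Hermitian matrices each with trace 1. Then the quantum relative entropy is additive over Kronecker products: S(ρ₁ ⊗ₖ ρ₂ ‖ σ₁ ⊗ₖ σ₂) = S(ρ₁ ‖ σ₁) + S(ρ₂ ‖ σ₂). -/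
open Matrix Kronecker
open scoped ComplexOrder

/-- The von Neumann entropy `S(ρ) = -Re (tr (ρ log ρ))`. -/
noncomputable def vnEntropy {n : Type*} [Fintype n] [DecidableEq n]
    (ρ : Matrix n n ℂ) : ℝ :=
  -(Matrix.trace (ρ * matLog ρ)).re

/-- The quantum relative entropy `S(ρ‖σ) = Re (tr (ρ (log ρ - log σ)))`. -/
noncomputable def relEnt {n : Type*} [Fintype n] [DecidableEq n]
    (ρ σ : Matrix n n ℂ) : ℝ :=
  (Matrix.trace (ρ * (matLog ρ - matLog σ))).re

/-- Partial trace over the second tensor factor. -/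
noncomputable def ptr₂ {ι κ : Type*} [Fintype κ]
    (M : Matrix (ι × κ) (ι × κ) ℂ) : Matrix ι ι ℂ :=
  Matrix.of fun i i' => ∑ k, M (i, k) (i', k)

/-- Partial trace over the first tensor factor. -/
noncomputable def ptr₁ {ι κ : Type*} [Fintype ι]
    (M : Matrix (ι × κ) (ι × κ) ℂ) : Matrix κ κ ℂ :=
  Matrix.of fun k k' => ∑ i, M (i, k) (i, k')

namespace QRelEntAux

variable {n : Type*} [Fintype n] [DecidableEq n]

/-- Auxiliary star algebra homomorphism: conjugation of a diagonal matrix by a unitary. -/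
noncomputable def conjDiagHom (u : unitary (Matrix n n ℂ)) {M : Matrix n n ℂ} (d : n → ℝ)
    (hs : ∀ i, d i ∈ spectrum ℝ M) :
    C(spectrum ℝ M, ℝ) →⋆ₐ[ℝ] Matrix n n ℂ where
  toFun g := (u : Matrix n n ℂ) *
    diagonal (Complex.ofReal ∘ g ∘ fun i => (⟨d i, hs i⟩ : spectrum ℝ M)) *
    star (u : Matrix n n ℂ)
  map_one' := by simp [Pi.one_def (M := fun _ : n ↦ ℂ)]
  map_mul' f g := by
    have {a b c d e f : Matrix n n ℂ} : (a * b * c) * (d * e * f) = a * (b * (c * d) * e) * f := by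
      simp only [mul_assoc]
    simp only [this, ContinuousMap.coe_mul, SetLike.coe_mem, Unitary.star_mul_self_of_mem, mul_one,
      diagonal_mul_diagonal, Function.comp_apply]
    congr! with i
    simp
  map_zero' := by simp [Pi.zero_def (M := fun _ : n ↦ ℂ)]
  map_add' f g := by
    simp only [ContinuousMap.coe_add, ← add_mul, ← mul_add, diagonal_add, Function.comp_apply]
    congr! with i
    simp
  commutes' r := by
    simp only [Function.comp_def, algebraMap_apply, smul_eq_mul, mul_one]
    rw [← mul_one (algebraMap _ _ _), ← Unitary.coe_mul_star_self u,
      ← Algebra.left_comm, Unitary.coe_star, mul_assoc]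
    congr!
  map_star' f := by
    simp only [star_trivial, StarMul.star_mul, star_star, star_eq_conjTranspose (diagonal _),
      diagonal_conjTranspose, mul_assoc]
    congr!
    ext
    simp

lemma continuous_conjDiagHom (u : unitary (Matrix n n ℂ)) {M : Matrix n n ℂ} (d : n → ℝ)
    (hs : ∀ i, d i ∈ spectrum ℝ M) : Continuous (conjDiagHom u d hs) := by
  show Continuous fun g : C(spectrum ℝ M, ℝ) => (u : Matrix n n ℂ) *
    diagonal (Complex.ofReal ∘ g ∘ fun i => (⟨d i, hs i⟩ : spectrum ℝ M)) *
    star (u : Matrix n n ℂ)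
  refine ((continuous_const.matrix_mul ?_).matrix_mul continuous_const)
  refine Continuous.matrix_diagonal ?_
  refine continuous_pi fun i => ?_
  exact Complex.continuous_ofReal.comp (continuous_eval_const _)

/-- If a Hermitian matrix is written as a unitary conjugate of a real diagonal matrix,
its CFC is obtained by applying the function to the diagonal entries. -/
lemma cfc_conj {M : Matrix n n ℂ} (hM : M.IsHermitian) (u : unitary (Matrix n n ℂ)) (d : n → ℝ)
    (hMe : M = (u : Matrix n n ℂ) * diagonal (Complex.ofReal ∘ d) * star (u : Matrix n n ℂ))
    (f : ℝ → ℝ) :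
    hM.cfc f = (u : Matrix n n ℂ) * diagonal (Complex.ofReal ∘ f ∘ d) *
      star (u : Matrix n n ℂ) := by
  subst hMe
  set M : Matrix n n ℂ := (u : Matrix n n ℂ) * diagonal (Complex.ofReal ∘ d) *
    star (u : Matrix n n ℂ) with hMdef
  have hs : ∀ i, d i ∈ spectrum ℝ M := by
    intro i
    have h1 : spectrum ℝ M = spectrum ℝ (diagonal (Complex.ofReal ∘ d) : Matrix n n ℂ) :=
      Unitary.spectrum_star_right_conjugate
    rw [h1, ← spectrum.algebraMap_mem_iff ℂ, spectrum_diagonal]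
    exact ⟨i, rfl⟩
  have hM' : IsSelfAdjoint M := hM
  have h1 := cfcHom_eq_of_continuous_of_map_id hM' (conjDiagHom u d hs)
    (continuous_conjDiagHom u d hs) (by
      simp only [conjDiagHom, StarAlgHom.coe_mk, AlgHom.coe_mk, RingHom.coe_mk, MonoidHom.coe_mk,
        OneHom.coe_mk]
      congr!)
  rw [← Matrix.IsHermitian.cfc_eq hM f,
    cfc_apply f M hM' (by rw [continuousOn_iff_continuous_restrict]; fun_prop), h1]
  rfl

variable {ι κ : Type*} [Fintype ι] [Fintype κ] [DecidableEq ι] [DecidableEq κ]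

omit [Fintype ι] [Fintype κ] [DecidableEq ι] [DecidableEq κ] in
lemma star_kronecker (A : Matrix ι ι ℂ) (B : Matrix κ κ ℂ) :
    star (A ⊗ₖ B) = star A ⊗ₖ star B := by
  ext ⟨i, k⟩ ⟨j, l⟩
  simp [star_eq_conjTranspose, conjTranspose_apply, mul_comm]

omit [Fintype ι] [Fintype κ] [DecidableEq ι] [DecidableEq κ] in
lemma isHermitian_kronecker {A : Matrix ι ι ℂ} {B : Matrix κ κ ℂ}
    (hA : A.IsHermitian) (hB : B.IsHermitian) : (A ⊗ₖ B).IsHermitian := by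
  have h : star (A ⊗ₖ B) = A ⊗ₖ B := by
    rw [star_kronecker]
    have hA' : star A = A := hA
    have hB' : star B = B := hB
    rw [hA', hB']
  exact h

lemma kronecker_mem_unitary {A : Matrix ι ι ℂ} {B : Matrix κ κ ℂ}
    (hA : A ∈ unitary (Matrix ι ι ℂ)) (hB : B ∈ unitary (Matrix κ κ ℂ)) :
    A ⊗ₖ B ∈ unitary (Matrix (ι × κ) (ι × κ) ℂ) := by
  rw [Unitary.mem_iff]
  rw [star_kronecker, ← mul_kronecker_mul, ← mul_kronecker_mul,
    Unitary.star_mul_self_of_mem hA, Unitary.star_mul_self_of_mem hB,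
    Unitary.mul_star_self_of_mem hA, Unitary.mul_star_self_of_mem hB, one_kronecker_one]
  exact ⟨rfl, rfl⟩

lemma matLog_posDef {A : Matrix ι ι ℂ} (hA : A.PosDef) :
    matLog A = (hA.1.eigenvectorUnitary : Matrix ι ι ℂ) *
      diagonal (Complex.ofReal ∘ Real.log ∘ hA.1.eigenvalues) *
      star (hA.1.eigenvectorUnitary : Matrix ι ι ℂ) := by
  rw [matLog, dif_pos hA.1]
  rfl

lemma matLog_kronecker {A : Matrix ι ι ℂ} {B : Matrix κ κ ℂ}
    (hA : A.PosDef) (hB : B.PosDef) :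
    matLog (A ⊗ₖ B) = matLog A ⊗ₖ (1 : Matrix κ κ ℂ) + (1 : Matrix ι ι ℂ) ⊗ₖ matLog B := by
  have hK : (A ⊗ₖ B).IsHermitian := isHermitian_kronecker hA.1 hB.1
  set U₁ : Matrix ι ι ℂ := (hA.1.eigenvectorUnitary : Matrix ι ι ℂ) with hU₁def
  set U₂ : Matrix κ κ ℂ := (hB.1.eigenvectorUnitary : Matrix κ κ ℂ) with hU₂def
  have hU₁ : U₁ ∈ unitary (Matrix ι ι ℂ) := SetLike.coe_mem _
  have hU₂ : U₂ ∈ unitary (Matrix κ κ ℂ) := SetLike.coe_mem _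
  set u : unitary (Matrix (ι × κ) (ι × κ) ℂ) :=
    ⟨U₁ ⊗ₖ U₂, kronecker_mem_unitary hU₁ hU₂⟩ with hu
  set d : ι × κ → ℝ := fun p => hA.1.eigenvalues p.1 * hB.1.eigenvalues p.2 with hd
  have hMe : A ⊗ₖ B = (u : Matrix (ι × κ) (ι × κ) ℂ) * diagonal (Complex.ofReal ∘ d) *
      star (u : Matrix (ι × κ) (ι × κ) ℂ) := by
    conv_lhs => rw [hA.1.spectral_theorem, hB.1.spectral_theorem, Unitary.conjStarAlgAut_apply,
      Unitary.conjStarAlgAut_apply]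
    show _ = (U₁ ⊗ₖ U₂) * _ * star (U₁ ⊗ₖ U₂)
    rw [star_kronecker, mul_kronecker_mul, mul_kronecker_mul, diagonal_kronecker_diagonal]
    congr 2
    rw [diagonal_eq_diagonal_iff]
    intro p
    simp [hd, Function.comp]
  have h1 : matLog (A ⊗ₖ B) = (u : Matrix (ι × κ) (ι × κ) ℂ) *
      diagonal (Complex.ofReal ∘ Real.log ∘ d) * star (u : Matrix (ι × κ) (ι × κ) ℂ) := by
    rw [matLog, dif_pos hK]
    exact cfc_conj hK u d hMe Real.log
  rw [h1, matLog_posDef hA, matLog_posDef hB]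
  have h2 : (U₂ : Matrix κ κ ℂ) * 1 * star U₂ = 1 := by
    rw [mul_one, Unitary.mul_star_self_of_mem hU₂]
  have h3 : (U₁ : Matrix ι ι ℂ) * 1 * star U₁ = 1 := by
    rw [mul_one, Unitary.mul_star_self_of_mem hU₁]
  conv_rhs => rw [← h2]
  conv_rhs => rw [← h3]
  simp only [← hU₁def, ← hU₂def, mul_kronecker_mul, ← star_kronecker]
  show (U₁ ⊗ₖ U₂) * _ * star (U₁ ⊗ₖ U₂) = (U₁ ⊗ₖ U₂) * _ * star (U₁ ⊗ₖ U₂) +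
    (U₁ ⊗ₖ U₂) * _ * star (U₁ ⊗ₖ U₂)
  rw [← add_mul, ← mul_add]
  congr 2
  rw [← diagonal_one, diagonal_kronecker_diagonal, ← diagonal_one (n := ι),
    diagonal_kronecker_diagonal, diagonal_add]
  rw [diagonal_eq_diagonal_iff]
  intro p
  have h4 : Real.log (d p) = Real.log (hA.1.eigenvalues p.1) + Real.log (hB.1.eigenvalues p.2) :=
    Real.log_mul (ne_of_gt (hA.eigenvalues_pos p.1)) (ne_of_gt (hB.eigenvalues_pos p.2))
  simp only [hd, Function.comp_apply, h4, Pi.one_apply, mul_one, one_mul]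
  rw [Real.log_mul (ne_of_gt (hA.eigenvalues_pos p.1)) (ne_of_gt (hB.eigenvalues_pos p.2))]
  push_cast
  ring

end QRelEntAux

open QRelEntAux in
/-- Additivity of the quantum relative entropy over Kronecker products:
`S(ρ₁ ⊗ₖ ρ₂ ‖ σ₁ ⊗ₖ σ₂) = S(ρ₁ ‖ σ₁) + S(ρ₂ ‖ σ₂)`. -/
theorem relEnt_kronecker {ι κ : Type*} [Fintype ι] [Fintype κ]
    [DecidableEq ι] [DecidableEq κ] [Nonempty ι] [Nonempty κ]
    (ρ₁ σ₁ : Matrix ι ι ℂ) (ρ₂ σ₂ : Matrix κ κ ℂ)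
    (hρ₁ : ρ₁.PosDef) (hσ₁ : σ₁.PosDef) (hρ₂ : ρ₂.PosDef) (hσ₂ : σ₂.PosDef)
    (hρ₁1 : Matrix.trace ρ₁ = 1) (hσ₁1 : Matrix.trace σ₁ = 1)
    (hρ₂1 : Matrix.trace ρ₂ = 1) (hσ₂1 : Matrix.trace σ₂ = 1) :
    relEnt (ρ₁ ⊗ₖ ρ₂) (σ₁ ⊗ₖ σ₂) = relEnt ρ₁ σ₁ + relEnt ρ₂ σ₂ := by
  have key : Matrix.trace ((ρ₁ ⊗ₖ ρ₂) * (matLog (ρ₁ ⊗ₖ ρ₂) - matLog (σ₁ ⊗ₖ σ₂))) =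
      Matrix.trace (ρ₁ * (matLog ρ₁ - matLog σ₁)) +
      Matrix.trace (ρ₂ * (matLog ρ₂ - matLog σ₂)) := by
    rw [matLog_kronecker hρ₁ hρ₂, matLog_kronecker hσ₁ hσ₂]
    have hsplit : matLog ρ₁ ⊗ₖ (1 : Matrix κ κ ℂ) + (1 : Matrix ι ι ℂ) ⊗ₖ matLog ρ₂ -
        (matLog σ₁ ⊗ₖ (1 : Matrix κ κ ℂ) + (1 : Matrix ι ι ℂ) ⊗ₖ matLog σ₂) =
        (matLog ρ₁ - matLog σ₁) ⊗ₖ (1 : Matrix κ κ ℂ) +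
        (1 : Matrix ι ι ℂ) ⊗ₖ (matLog ρ₂ - matLog σ₂) := by
      ext ⟨i, k⟩ ⟨j, l⟩
      simp only [Matrix.sub_apply, Matrix.add_apply, Matrix.kroneckerMap_apply]
      ring
    rw [hsplit, mul_add, Matrix.trace_add, ← mul_kronecker_mul, ← mul_kronecker_mul,
      Matrix.trace_kronecker, Matrix.trace_kronecker]
    simp [hρ₁1, hρ₂1]
  rw [relEnt, relEnt, relEnt, key, Complex.add_re]
end

section
/- Let ι and κ be finite nonempty index types, let ρ, ρ' : Matrix (ι × κ) (ι × κ) ℂ be positive definite Hermitian matrices with Matrix.trace ρ = 1 and Matrix.trace ρ' = 1, and suppose they have equal marginals: ptr₂ ρ = ptr₂ ρ' and ptr₁ ρ = ptr₁ ρ'. Let σ_A : Matrix ι ι ℂ and σ_B : Matrix κ κ ℂ be positive definite Hermitian matrices. Then S(ρ ‖ σ_A ⊗ₖ σ_B) − S(ρ' ‖ σ_A ⊗ₖ σ_B) = S(ρ') − S(ρ). -/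
open Matrix Kronecker
open scoped ComplexOrder

namespace VNAux

variable {m : Type*} [Fintype m] [DecidableEq m]

lemma star_diag_real (d : m → ℝ) :
    star (Matrix.diagonal (Complex.ofReal ∘ d)) = Matrix.diagonal (Complex.ofReal ∘ d) := by
  ext i j
  simp only [Matrix.star_apply, Matrix.diagonal_apply, Function.comp_apply]
  split <;> simp_all [Complex.conj_ofReal, eq_comm]

lemma isHermitian_conj_diag (W : Matrix.unitaryGroup m ℂ) (d : m → ℝ) :
    ((W : Matrix m m ℂ) * Matrix.diagonal (Complex.ofReal ∘ d)
      * star (W : Matrix m m ℂ)).IsHermitian := by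
  show _ᴴ = _
  rw [← Matrix.star_eq_conjTranspose]
  simp only [StarMul.star_mul, star_star, mul_assoc, ← mul_assoc]
  rw [star_diag_real]

lemma spec_conj_diag [Nonempty m] (W : Matrix.unitaryGroup m ℂ) (d : m → ℝ) :
    spectrum ℝ ((W : Matrix m m ℂ) * Matrix.diagonal (Complex.ofReal ∘ d)
      * star (W : Matrix m m ℂ)) = Set.range d := by
  ext x
  rw [← spectrum.algebraMap_mem_iff ℂ, Unitary.spectrum_star_right_conjugate,
    spectrum_diagonal]
  simp only [Complex.coe_algebraMap, Function.comp_apply, Set.mem_range]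
  exact ⟨fun ⟨i, hi⟩ => ⟨i, by exact_mod_cast hi⟩, fun ⟨i, hi⟩ => ⟨i, by exact_mod_cast hi⟩⟩

end VNAux

namespace VNAux2
open VNAux

variable {m : Type*} [Fintype m] [DecidableEq m]

/-- Analogue of `Matrix.IsHermitian.cfcAux` for an arbitrary unitary diagonalization. -/
@[simps]
noncomputable def conjDiagHom (W : Matrix.unitaryGroup m ℂ) (d : m → ℝ)
    (hmem : ∀ i, d i ∈ spectrum ℝ ((W : Matrix m m ℂ) * Matrix.diagonal (Complex.ofReal ∘ d)
      * star (W : Matrix m m ℂ))) :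
    C(spectrum ℝ ((W : Matrix m m ℂ) * Matrix.diagonal (Complex.ofReal ∘ d)
      * star (W : Matrix m m ℂ)), ℝ) →⋆ₐ[ℝ] Matrix m m ℂ where
  toFun := fun g => (W : Matrix m m ℂ) *
    diagonal (Complex.ofReal ∘ g ∘ (fun i ↦ ⟨d i, hmem i⟩))
    * star (W : Matrix m m ℂ)
  map_one' := by simp [Pi.one_def (M := fun _ : m ↦ ℂ)]
  map_mul' f g := by
    have {a b c d e f : Matrix m m ℂ} : (a * b * c) * (d * e * f) = a * (b * (c * d) * e) * f := by
      simp only [mul_assoc]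
    simp only [this, ContinuousMap.coe_mul, SetLike.coe_mem, Unitary.star_mul_self_of_mem, mul_one,
      diagonal_mul_diagonal, Function.comp_apply]
    congr! with i
    simp
  map_zero' := by simp [Pi.zero_def (M := fun _ : m ↦ ℂ)]
  map_add' f g := by
    simp only [ContinuousMap.coe_add, ← add_mul, ← mul_add, diagonal_add, Function.comp_apply]
    congr! with i
    simp
  commutes' r := by
    simp only [Function.comp_def, algebraMap_apply, smul_eq_mul, mul_one]
    rw [← mul_one (algebraMap _ _ _), ← Unitary.coe_mul_star_self W,
      ← Algebra.left_comm, Unitary.coe_star, mul_assoc]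
    congr!
  map_star' f := by
    simp only [star_trivial, StarMul.star_mul, star_star, star_eq_conjTranspose (diagonal _),
      diagonal_conjTranspose, mul_assoc]
    congr!
    ext
    simp

lemma cfc_conj_diag [Nonempty m] (W : Matrix.unitaryGroup m ℂ) (d : m → ℝ) (f : ℝ → ℝ) :
    cfc f ((W : Matrix m m ℂ) * Matrix.diagonal (Complex.ofReal ∘ d) * star (W : Matrix m m ℂ))
      = (W : Matrix m m ℂ) * Matrix.diagonal (Complex.ofReal ∘ f ∘ d)
        * star (W : Matrix m m ℂ) := by
  set A := (W : Matrix m m ℂ) * Matrix.diagonal (Complex.ofReal ∘ d) * star (W : Matrix m m ℂ)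
    with hAdef
  have hA : A.IsHermitian := isHermitian_conj_diag W d
  have hA' : IsSelfAdjoint A := hA
  have hmem : ∀ i, d i ∈ spectrum ℝ A := fun i =>
    (spec_conj_diag W d).symm ▸ Set.mem_range_self i
  have h0 : FiniteDimensional ℝ C(spectrum ℝ A, ℝ) :=
    FiniteDimensional.of_injective (ContinuousMap.coeFnLinearMap ℝ (M := ℝ)) DFunLike.coe_injective
  have hcont : Continuous (conjDiagHom W d hmem) :=
    LinearMap.continuous_of_finiteDimensional (conjDiagHom W d hmem).toLinearMap
  have hid : conjDiagHom W d hmem (.restrict (spectrum ℝ A) (.id ℝ)) = A := by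
    show (W : Matrix m m ℂ) * _ * star (W : Matrix m m ℂ)
      = (W : Matrix m m ℂ) * Matrix.diagonal (Complex.ofReal ∘ d) * star (W : Matrix m m ℂ)
    congr!
  have key := cfcHom_eq_of_continuous_of_map_id hA' (conjDiagHom W d hmem) hcont hid
  rw [cfc_apply f A hA' (by rw [continuousOn_iff_continuous_restrict]; fun_prop), key]
  show (W : Matrix m m ℂ) * _ * star (W : Matrix m m ℂ) = _
  congr!

end VNAux2

namespace VNMain
open VNAux VNAux2

variable {ι κ : Type*} [Fintype ι] [Fintype κ] [DecidableEq ι] [DecidableEq κ]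

omit [Fintype ι] [Fintype κ] [DecidableEq ι] [DecidableEq κ] in
lemma star_kronecker (A : Matrix ι ι ℂ) (B : Matrix κ κ ℂ) :
    star (A ⊗ₖ B) = star A ⊗ₖ star B := by
  ext p q
  simp [Matrix.star_apply, mul_comm]

lemma kron_unitary_mem (U : Matrix.unitaryGroup ι ℂ) (V : Matrix.unitaryGroup κ ℂ) :
    ((U : Matrix ι ι ℂ) ⊗ₖ (V : Matrix κ κ ℂ)) ∈ Matrix.unitaryGroup (ι × κ) ℂ := by
  rw [Matrix.mem_unitaryGroup_iff, star_kronecker, ← Matrix.mul_kronecker_mul,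
    (Matrix.mem_unitaryGroup_iff).mp U.2, (Matrix.mem_unitaryGroup_iff).mp V.2,
    Matrix.one_kronecker_one]

/-- cfc of `Real.log` for a positive definite matrix, via its eigendecomposition. -/
lemma cfc_log_eq [Nonempty ι] (σ : Matrix ι ι ℂ) (hσ : σ.PosDef) :
    cfc Real.log σ
      = (hσ.1.eigenvectorUnitary : Matrix ι ι ℂ)
        * Matrix.diagonal (Complex.ofReal ∘ Real.log ∘ hσ.1.eigenvalues)
        * star (hσ.1.eigenvectorUnitary : Matrix ι ι ℂ) := by
  conv_lhs => rw [hσ.1.spectral_theorem]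
  exact cfc_conj_diag _ _ Real.log

lemma matLog_eq_cfc {n : Type*} [Fintype n] [DecidableEq n] (A : Matrix n n ℂ)
    (hA : A.IsHermitian) : matLog A = cfc Real.log A := by
  rw [matLog, dif_pos hA, ← hA.cfc_eq]

lemma matLog_kronecker [Nonempty ι] [Nonempty κ] (σA : Matrix ι ι ℂ) (σB : Matrix κ κ ℂ)
    (hσA : σA.PosDef) (hσB : σB.PosDef) :
    matLog (σA ⊗ₖ σB)
      = (matLog σA) ⊗ₖ (1 : Matrix κ κ ℂ) + (1 : Matrix ι ι ℂ) ⊗ₖ (matLog σB) := by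
  have hA := hσA.1
  have hB := hσB.1
  set UA : Matrix ι ι ℂ := (hA.eigenvectorUnitary : Matrix ι ι ℂ) with hUA
  set UB : Matrix κ κ ℂ := (hB.eigenvectorUnitary : Matrix κ κ ℂ) with hUB
  let W : Matrix.unitaryGroup (ι × κ) ℂ := ⟨UA ⊗ₖ UB, kron_unitary_mem _ _⟩
  let d : ι × κ → ℝ := fun p => hA.eigenvalues p.1 * hB.eigenvalues p.2
  have hstarW : star (W : Matrix (ι × κ) (ι × κ) ℂ) = star UA ⊗ₖ star UB := star_kronecker _ _
  have hd : Complex.ofReal ∘ d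
      = fun mn : ι × κ => (hA.eigenvalues mn.1 : ℂ) * (hB.eigenvalues mn.2 : ℂ) := by
    funext p
    simp [d]
  have hdecomp : σA ⊗ₖ σB = (W : Matrix (ι × κ) (ι × κ) ℂ)
      * Matrix.diagonal (Complex.ofReal ∘ d) * star (W : Matrix (ι × κ) (ι × κ) ℂ) := by
    rw [hd]
    conv_lhs => rw [hA.spectral_theorem, hB.spectral_theorem, Unitary.conjStarAlgAut_apply,
      Unitary.conjStarAlgAut_apply]
    rw [Matrix.mul_kronecker_mul, Matrix.mul_kronecker_mul, Matrix.diagonal_kronecker_diagonal,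
      hstarW]
    rfl
  have hherm : (σA ⊗ₖ σB).IsHermitian := hdecomp ▸ isHermitian_conj_diag W d
  rw [matLog_eq_cfc _ hherm, hdecomp, cfc_conj_diag W d Real.log,
    matLog_eq_cfc _ hA, matLog_eq_cfc _ hB, cfc_log_eq _ hσA, cfc_log_eq _ hσB]
  have hlog : (Complex.ofReal ∘ Real.log ∘ d)
      = fun p : ι × κ => (Real.log (hA.eigenvalues p.1) : ℂ) * 1
        + 1 * (Real.log (hB.eigenvalues p.2) : ℂ) := by
    funext p
    simp only [Function.comp_apply, d,
      Real.log_mul (hσA.eigenvalues_pos p.1).ne' (hσB.eigenvalues_pos p.2).ne']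
    push_cast
    ring
  rw [hlog]
  have hdsplit : Matrix.diagonal (fun p : ι × κ => (Real.log (hA.eigenvalues p.1) : ℂ) * 1
        + 1 * (Real.log (hB.eigenvalues p.2) : ℂ))
      = (Matrix.diagonal (Complex.ofReal ∘ Real.log ∘ hA.eigenvalues)) ⊗ₖ (1 : Matrix κ κ ℂ)
        + (1 : Matrix ι ι ℂ) ⊗ₖ (Matrix.diagonal (Complex.ofReal ∘ Real.log ∘ hB.eigenvalues)) := by
    rw [← Matrix.diagonal_one, ← Matrix.diagonal_one, Matrix.diagonal_kronecker_diagonal,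
      Matrix.diagonal_kronecker_diagonal, Matrix.diagonal_add]
    rfl
  rw [hdsplit, mul_add, add_mul, hstarW]
  show (UA ⊗ₖ UB) * _ * _ + (UA ⊗ₖ UB) * _ * _ = _
  rw [← Matrix.mul_kronecker_mul, ← Matrix.mul_kronecker_mul, ← Matrix.mul_kronecker_mul,
    ← Matrix.mul_kronecker_mul]
  congr 1
  · congr 1
    rw [mul_one, (Matrix.mem_unitaryGroup_iff).mp hB.eigenvectorUnitary.2]
  · congr 1
    rw [mul_one, (Matrix.mem_unitaryGroup_iff).mp hA.eigenvectorUnitary.2]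

lemma mul_kron_one_left_diag (M : Matrix (ι × κ) (ι × κ) ℂ) (X : Matrix ι ι ℂ) (p : ι × κ) :
    (M * (X ⊗ₖ (1 : Matrix κ κ ℂ))) p p = ∑ i', M p (i', p.2) * X i' p.1 := by
  rw [Matrix.mul_apply, Fintype.sum_prod_type]
  refine Finset.sum_congr rfl fun i' _ => ?_
  rw [Finset.sum_eq_single p.2 (fun k' _ hne => by simp [Matrix.one_apply, hne]) (by simp)]
  simp [Matrix.one_apply]

lemma mul_kron_one_right_diag (M : Matrix (ι × κ) (ι × κ) ℂ) (Y : Matrix κ κ ℂ) (p : ι × κ) :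
    (M * ((1 : Matrix ι ι ℂ) ⊗ₖ Y)) p p = ∑ k', M p (p.1, k') * Y k' p.2 := by
  rw [Matrix.mul_apply, Fintype.sum_prod_type]
  rw [Finset.sum_eq_single p.1 (fun i' _ hne => by simp [Matrix.one_apply, hne]) (by simp)]
  simp [Matrix.one_apply]

lemma trace_mul_kron_left (M : Matrix (ι × κ) (ι × κ) ℂ) (X : Matrix ι ι ℂ) :
    Matrix.trace (M * (X ⊗ₖ (1 : Matrix κ κ ℂ))) = Matrix.trace (ptr₂ M * X) := by
  have h1 : Matrix.trace (M * (X ⊗ₖ (1 : Matrix κ κ ℂ)))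
      = ∑ i, ∑ k, ∑ i', M (i, k) (i', k) * X i' i := by
    exact (Finset.sum_congr rfl fun p _ => mul_kron_one_left_diag M X p).trans
      (Fintype.sum_prod_type (f := fun p : ι × κ => ∑ i', M p (i', p.2) * X i' p.1))
  have h2 : Matrix.trace (ptr₂ M * X) = ∑ i, ∑ i', ∑ k, M (i, k) (i', k) * X i' i := by
    simp only [Matrix.trace, Matrix.diag, Matrix.mul_apply, ptr₂, Matrix.of_apply, Finset.sum_mul]
  rw [h1, h2]
  exact Finset.sum_congr rfl fun i _ => Finset.sum_comm

lemma trace_mul_kron_right (M : Matrix (ι × κ) (ι × κ) ℂ) (Y : Matrix κ κ ℂ) :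
    Matrix.trace (M * ((1 : Matrix ι ι ℂ) ⊗ₖ Y)) = Matrix.trace (ptr₁ M * Y) := by
  have h1 : Matrix.trace (M * ((1 : Matrix ι ι ℂ) ⊗ₖ Y))
      = ∑ i, ∑ k, ∑ k', M (i, k) (i, k') * Y k' k := by
    exact (Finset.sum_congr rfl fun p _ => mul_kron_one_right_diag M Y p).trans
      (Fintype.sum_prod_type (f := fun p : ι × κ => ∑ k', M p (p.1, k') * Y k' p.2))
  have h2 : Matrix.trace (ptr₁ M * Y) = ∑ k, ∑ k', ∑ i, M (i, k) (i, k') * Y k' k := by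
    simp only [Matrix.trace, Matrix.diag, Matrix.mul_apply, ptr₁, Matrix.of_apply, Finset.sum_mul]
  rw [h1, h2, Finset.sum_comm]
  exact Finset.sum_congr rfl fun k _ => Finset.sum_comm

end VNMain

/-- Two states with equal marginals have relative entropies to a common product
reference differing only by the difference of their von Neumann entropies:
`S(ρ ‖ σ_A ⊗ₖ σ_B) - S(ρ' ‖ σ_A ⊗ₖ σ_B) = S(ρ') - S(ρ)`. -/
theorem relEnt_diff_of_equal_marginals {ι κ : Type*} [Fintype ι] [Fintype κ]
    [DecidableEq ι] [DecidableEq κ] [Nonempty ι] [Nonempty κ]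
    (ρ ρ' : Matrix (ι × κ) (ι × κ) ℂ) (hρ : ρ.PosDef) (hρ' : ρ'.PosDef)
    (hρ1 : Matrix.trace ρ = 1) (hρ'1 : Matrix.trace ρ' = 1)
    (h₂ : ptr₂ ρ = ptr₂ ρ') (h₁ : ptr₁ ρ = ptr₁ ρ')
    (σA : Matrix ι ι ℂ) (σB : Matrix κ κ ℂ)
    (hσA : σA.PosDef) (hσB : σB.PosDef) :
    relEnt ρ (σA ⊗ₖ σB) - relEnt ρ' (σA ⊗ₖ σB) = vnEntropy ρ' - vnEntropy ρ := by
  have key : Matrix.trace (ρ * matLog (σA ⊗ₖ σB)) = Matrix.trace (ρ' * matLog (σA ⊗ₖ σB)) := by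
    rw [VNMain.matLog_kronecker σA σB hσA hσB, mul_add, mul_add, Matrix.trace_add,
      Matrix.trace_add, VNMain.trace_mul_kron_left, VNMain.trace_mul_kron_right,
      VNMain.trace_mul_kron_left, VNMain.trace_mul_kron_right, h₂, h₁]
  simp only [relEnt, vnEntropy, mul_sub, Matrix.trace_sub, Complex.sub_re]
  rw [key]
  ring
end

section
/- Let n be a finite nonempty index type, and let ρ, σ : Matrix n n ℂ be positive definite Hermitian matrices with Matrix.trace ρ = 1 and Matrix.trace σ = 1. Then the quantum relative entropy is nonnegative: S(ρ ‖ σ) ≥ 0 (Klein's inequality). -/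
open Matrix Kronecker
open scoped ComplexOrder

lemma trace_conj_re {n : Type*} [Fintype n] [DecidableEq n] (p q : n → ℝ)
    (U V : Matrix n n ℂ) :
    (Matrix.trace (U * Matrix.diagonal (Complex.ofReal ∘ p) * star U *
      (V * Matrix.diagonal (Complex.ofReal ∘ q) * star V))).re
    = ∑ i, ∑ j, p i * q j * Complex.normSq ((star U * V) i j) := by
  set W := star U * V with hW
  have hc : Matrix.trace (U * Matrix.diagonal (Complex.ofReal ∘ p) * star U *
      (V * Matrix.diagonal (Complex.ofReal ∘ q) * star V))
      = Matrix.trace (Matrix.diagonal (Complex.ofReal ∘ p) * W *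
          Matrix.diagonal (Complex.ofReal ∘ q) * star W) := by
    rw [show U * Matrix.diagonal (Complex.ofReal ∘ p) * star U *
      (V * Matrix.diagonal (Complex.ofReal ∘ q) * star V)
      = U * (Matrix.diagonal (Complex.ofReal ∘ p) * star U *
        (V * Matrix.diagonal (Complex.ofReal ∘ q) * star V)) by
        simp only [Matrix.mul_assoc]]
    rw [Matrix.trace_mul_comm]
    simp only [hW, StarMul.star_mul, star_star, Matrix.mul_assoc]
  rw [hc]
  have : ∀ i j, (Matrix.diagonal (Complex.ofReal ∘ p) * W *
      Matrix.diagonal (Complex.ofReal ∘ q)) i j = (p i : ℂ) * W i j * (q j : ℂ) := by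
    intro i j
    simp [Matrix.diagonal_mul, Matrix.mul_diagonal]
  rw [Matrix.trace]
  simp only [Matrix.diag_apply, Matrix.mul_apply, this, Matrix.star_eq_conjTranspose,
    Matrix.conjTranspose_apply]
  rw [Complex.re_sum]
  refine Finset.sum_congr rfl fun i _ => ?_
  rw [Complex.re_sum]
  refine Finset.sum_congr rfl fun j _ => ?_
  have : (p i : ℂ) * W i j * (q j : ℂ) * star (W i j)
      = ((p i * q j * Complex.normSq (W i j) : ℝ) : ℂ) := by
    push_cast
    rw [show (p i : ℂ) * W i j * (q j : ℂ) * star (W i j)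
      = (p i : ℂ) * (q j : ℂ) * (W i j * star (W i j)) by ring]
    rw [Complex.star_def, Complex.mul_conj]
  rw [this, Complex.ofReal_re]

lemma klein_pointwise {a b : ℝ} (ha : 0 < a) (hb : 0 < b) :
    a - b ≤ a * Real.log a - a * Real.log b := by
  have h := Real.log_le_sub_one_of_pos (x := b / a) (by positivity)
  rw [Real.log_div hb.ne' ha.ne'] at h
  have := mul_le_mul_of_nonneg_left h ha.le
  have h2 : a * (b / a - 1) = b - a := by field_simp
  rw [h2] at this
  linarith


/-- Klein's inequality: the quantum relative entropy between two positive
definite trace-one states is nonnegative. -/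
theorem relEnt_nonneg {n : Type*} [Fintype n] [DecidableEq n] [Nonempty n]
    (ρ σ : Matrix n n ℂ) (hρ : ρ.PosDef) (hσ : σ.PosDef)
    (hρ1 : Matrix.trace ρ = 1) (hσ1 : Matrix.trace σ = 1) :
    0 ≤ relEnt ρ σ := by
  have hρh := hρ.1
  have hσh := hσ.1
  set U : Matrix n n ℂ := ↑(hρh.eigenvectorUnitary) with hU
  set V : Matrix n n ℂ := ↑(hσh.eigenvectorUnitary) with hV
  set p := hρh.eigenvalues with hp
  set q := hσh.eigenvalues with hq
  have hppos : ∀ i, 0 < p i := hρ.eigenvalues_pos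
  have hqpos : ∀ j, 0 < q j := hσ.eigenvalues_pos
  set W := star U * V with hWdef
  -- unitarity facts
  have hUU : star U * U = 1 := Unitary.coe_star_mul_self hρh.eigenvectorUnitary
  have hUU' : U * star U = 1 := Unitary.coe_mul_star_self hρh.eigenvectorUnitary
  have hVV : star V * V = 1 := Unitary.coe_star_mul_self hσh.eigenvectorUnitary
  have hVV' : V * star V = 1 := Unitary.coe_mul_star_self hσh.eigenvectorUnitary
  have hWW : W * star W = 1 := by
    rw [hWdef, StarMul.star_mul, star_star]
    calc star U * V * (star V * U) = star U * (V * star V) * U := by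
          simp only [Matrix.mul_assoc]
      _ = 1 := by rw [hVV', mul_one, hUU]
  have hWW' : star W * W = 1 := by
    rw [hWdef, StarMul.star_mul, star_star]
    calc star V * U * (star U * V) = star V * (U * star U) * V := by
          simp only [Matrix.mul_assoc]
      _ = 1 := by rw [hUU', mul_one, hVV]
  -- row and column sums of |W i j|^2
  have hrow : ∀ i, ∑ j, Complex.normSq (W i j) = 1 := by
    intro i
    have h1 : (W * star W) i i = 1 := by rw [hWW]; simp
    have h2 : (W * star W) i i = ∑ j, ((Complex.normSq (W i j) : ℝ) : ℂ) := by
      simp only [Matrix.mul_apply, Matrix.star_eq_conjTranspose, Matrix.conjTranspose_apply]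
      refine Finset.sum_congr rfl fun j _ => ?_
      rw [Complex.star_def, Complex.mul_conj]
    have := h1.symm.trans h2
    have := congrArg Complex.re this
    rw [Complex.re_sum] at this
    simpa using this.symm
  have hcol : ∀ j, ∑ i, Complex.normSq (W i j) = 1 := by
    intro j
    have h1 : (star W * W) j j = 1 := by rw [hWW']; simp
    have h2 : (star W * W) j j = ∑ i, ((Complex.normSq (W i j) : ℝ) : ℂ) := by
      simp only [Matrix.mul_apply, Matrix.star_eq_conjTranspose, Matrix.conjTranspose_apply]
      refine Finset.sum_congr rfl fun i _ => ?_
      rw [Complex.star_def, mul_comm, Complex.mul_conj]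
    have := h1.symm.trans h2
    have := congrArg Complex.re this
    rw [Complex.re_sum] at this
    simpa using this.symm
  -- trace identities
  have hρspec : ρ = U * Matrix.diagonal (Complex.ofReal ∘ p) * star U := hρh.spectral_theorem
  have hlogρ : matLog ρ = U * Matrix.diagonal (Complex.ofReal ∘ (Real.log ∘ p)) * star U := by
    rw [matLog, dif_pos hρh]
    rfl
  have hlogσ : matLog σ = V * Matrix.diagonal (Complex.ofReal ∘ (Real.log ∘ q)) * star V := by
    rw [matLog, dif_pos hσh]
    rfl
  have h1 : (Matrix.trace (ρ * matLog ρ)).re = ∑ i, p i * Real.log (p i) := by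
    rw [hlogρ]
    conv_lhs => rw [hρspec]
    rw [trace_conj_re p (Real.log ∘ p) U U, hUU]
    refine Finset.sum_congr rfl fun i _ => ?_
    rw [Finset.sum_eq_single i]
    · simp
    · intro j _ hj
      simp [Matrix.one_apply_ne' hj]
    · simp
  have h2 : (Matrix.trace (ρ * matLog σ)).re
      = ∑ i, ∑ j, p i * Real.log (q j) * Complex.normSq (W i j) := by
    rw [hlogσ]
    conv_lhs => rw [hρspec]
    rw [trace_conj_re p (Real.log ∘ q) U V]
    rfl
  have hps : ∑ i, p i = 1 := by
    have ht : Matrix.trace ρ = ∑ i, ((p i : ℝ) : ℂ) := by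
      conv_lhs => rw [hρspec]
      rw [Matrix.trace_mul_cycle, hUU, one_mul, Matrix.trace_diagonal]
      rfl
    have := congrArg Complex.re (ht.symm.trans hρ1)
    rw [Complex.re_sum] at this
    simpa using this
  have hqs : ∑ j, q j = 1 := by
    have ht : Matrix.trace σ = ∑ j, ((q j : ℝ) : ℂ) := by
      conv_lhs => rw [show σ = V * Matrix.diagonal (Complex.ofReal ∘ q) * star V from hσh.spectral_theorem]
      rw [Matrix.trace_mul_cycle, hVV, one_mul, Matrix.trace_diagonal]
      rfl
    have := congrArg Complex.re (ht.symm.trans hσ1)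
    rw [Complex.re_sum] at this
    simpa using this
  have hEnt : relEnt ρ σ = ∑ i, ∑ j,
      Complex.normSq (W i j) * (p i * Real.log (p i) - p i * Real.log (q j)) := by
    rw [relEnt, mul_sub, Matrix.trace_sub, Complex.sub_re, h1, h2]
    rw [show ∑ i, p i * Real.log (p i)
        = ∑ i, ∑ j, Complex.normSq (W i j) * (p i * Real.log (p i)) by
      refine Finset.sum_congr rfl fun i _ => ?_
      rw [← Finset.sum_mul, hrow i, one_mul]]
    rw [← Finset.sum_sub_distrib]
    refine Finset.sum_congr rfl fun i _ => ?_
    rw [← Finset.sum_sub_distrib]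
    refine Finset.sum_congr rfl fun j _ => ?_
    ring
  rw [hEnt]
  have hlow : ∑ i, ∑ j, Complex.normSq (W i j) * (p i - q j)
      ≤ ∑ i, ∑ j, Complex.normSq (W i j) * (p i * Real.log (p i) - p i * Real.log (q j)) := by
    refine Finset.sum_le_sum fun i _ => Finset.sum_le_sum fun j _ => ?_
    exact mul_le_mul_of_nonneg_left (klein_pointwise (hppos i) (hqpos j))
      (Complex.normSq_nonneg _)
  refine le_trans (le_of_eq ?_) hlow
  simp only [mul_sub, Finset.sum_sub_distrib]
  have e1 : ∑ i, ∑ j, Complex.normSq (W i j) * p i = 1 := by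
    calc ∑ i, ∑ j, Complex.normSq (W i j) * p i
        = ∑ i, (∑ j, Complex.normSq (W i j)) * p i := by
          refine Finset.sum_congr rfl fun i _ => (Finset.sum_mul ..).symm
      _ = ∑ i, p i := by
          refine Finset.sum_congr rfl fun i _ => by rw [hrow i, one_mul]
      _ = 1 := hps
  have e2 : ∑ i, ∑ j, Complex.normSq (W i j) * q j = 1 := by
    rw [Finset.sum_comm]
    calc ∑ j, ∑ i, Complex.normSq (W i j) * q j
        = ∑ j, (∑ i, Complex.normSq (W i j)) * q j := by
          refine Finset.sum_congr rfl fun j _ => (Finset.sum_mul ..).symm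
      _ = ∑ j, q j := by
          refine Finset.sum_congr rfl fun j _ => by rw [hcol j, one_mul]
      _ = 1 := hqs
  rw [e1, e2, sub_self]
end
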